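/- arXiv:2307.05123 — 2 statements merged into one kernel-verified Lean document; each statement's English description precedes it below -/
import Mathlib

section
/- Suppose g : {0,…,S} × ℕ → ℝ is non-decreasing in s and non-increasing in n. Then for any s, n < N, and any k with n+1 ≤ n+k ≤ N: ∑_{š=s}^{S} p_k(š|s) · g(š, n+1) ≥ ∑_{s̃=s}^{S} p_1(s̃|s) · g(s̃, n+1), where p_k denotes the k-step binomial transition kernel p_k(š|s) = C(S-s, š-s)(1-q^k)^(š-s)(q^k)^(S-š) with q = 1-p. -/
/-!
Both sides are expectations of the non-decreasing function `i ↦ g (s + i) (n + 1)` under binomial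
laws with `S - s` trials, of success probabilities `1 - q ^ k` and `1 - q = p` respectively, where
`q = 1 - p`. As `q ^ k ≤ q`, it suffices that such an expectation is non-decreasing in the success
probability `r`. This follows by induction on the number of trials from Pascal's rule
`E_{m+1,r}[f] = r E_{m,r}[f (· + 1)] + (1 - r) E_{m,r}[f]`: writing `A = E_{m,r}[f (· + 1)]` and
`B = E_{m,r}[f]`, so that `A ≥ B`, the right-hand side is `B + r (A - B)`, which grows both with
`r` and with `A` and `B`.
-/

open Finset

noncomputable def binomialExpectation (m : ℕ) (r : ℝ) (f : ℕ → ℝ) : ℝ :=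
  ∑ i ∈ range (m + 1), (m.choose i : ℝ) * r ^ i * (1 - r) ^ (m - i) * f i

theorem binomialExpectation_succ (m : ℕ) (r : ℝ) (f : ℕ → ℝ) :
    binomialExpectation (m + 1) r f =
      r * binomialExpectation m r (fun i => f (i + 1)) + (1 - r) * binomialExpectation m r f := by
  have hlower :
      ∑ i ∈ range (m + 1), (m.choose i : ℝ) * r ^ (i + 1) * (1 - r) ^ (m - i) * f (i + 1)
        = r * binomialExpectation m r (fun i => f (i + 1)) := by
    rw [binomialExpectation, mul_sum]
    exact sum_congr rfl fun i _ => by ring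
  have hupper :
      ∑ i ∈ range (m + 1),
          (m.choose (i + 1) : ℝ) * r ^ (i + 1) * (1 - r) ^ (m - i) * f (i + 1)
        + (1 - r) ^ (m + 1) * f 0 = (1 - r) * binomialExpectation m r f := by
    rw [binomialExpectation, sum_range_succ, sum_range_succ' _ m, Nat.choose_succ_self, mul_add,
      mul_sum]
    simp only [Nat.cast_zero, zero_mul, add_zero, Nat.choose_zero_right, Nat.cast_one, one_mul,
      pow_zero, Nat.sub_zero, pow_succ']
    congr 1
    · refine sum_congr rfl fun i hi => ?_
      rw [show m - i = m - (i + 1) + 1 by have := mem_range.1 hi; omega, pow_succ]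
      ring
    · ring
  rw [binomialExpectation, sum_range_succ']
  simp only [Nat.choose_succ_succ', Nat.succ_sub_succ, Nat.cast_add, add_mul, sum_add_distrib,
    hlower, Nat.choose_zero_right, Nat.cast_one, one_mul, pow_zero, Nat.sub_zero, add_assoc, hupper]

theorem binomialExpectation_le_of_le {m : ℕ} {r : ℝ} (hr₀ : 0 ≤ r) (hr₁ : r ≤ 1)
    {f f' : ℕ → ℝ} (hff' : ∀ i, f i ≤ f' i) :
    binomialExpectation m r f ≤ binomialExpectation m r f' :=
  sum_le_sum fun i _ =>
    mul_le_mul_of_nonneg_left (hff' i) (by have := sub_nonneg.2 hr₁; positivity)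

theorem binomialExpectation_mono_prob (m : ℕ) {f : ℕ → ℝ} (hf : Monotone f)
    {r₁ r₂ : ℝ} (hr₀ : 0 ≤ r₁) (hr : r₁ ≤ r₂) (hr₁ : r₂ ≤ 1) :
    binomialExpectation m r₁ f ≤ binomialExpectation m r₂ f := by
  induction m generalizing f with
  | zero => simp [binomialExpectation]
  | succ m ih =>
    set A := fun r => binomialExpectation m r fun i => f (i + 1)
    set B := fun r => binomialExpectation m r f
    have hA : A r₁ ≤ A r₂ := ih fun a b hab => hf (Nat.succ_le_succ hab)
    have hB : B r₁ ≤ B r₂ := ih hf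
    have hBA : B r₁ ≤ A r₁ :=
      binomialExpectation_le_of_le hr₀ (hr.trans hr₁) fun i => hf (Nat.le_succ i)
    have hr₂ : 0 ≤ 1 - r₂ := sub_nonneg.2 hr₁
    calc binomialExpectation (m + 1) r₁ f = B r₁ + r₁ * (A r₁ - B r₁) := by
          rw [binomialExpectation_succ]; ring
      _ ≤ B r₁ + r₂ * (A r₁ - B r₁) := by gcongr
      _ = r₂ * A r₁ + (1 - r₂) * B r₁ := by ring
      _ ≤ r₂ * A r₂ + (1 - r₂) * B r₂ := by gcongr; linarith
      _ = binomialExpectation (m + 1) r₂ f := (binomialExpectation_succ m r₂ f).symm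

theorem sum_Icc_eq_binomialExpectation {s S : ℕ} (hs : s ≤ S) (q : ℝ) (f : ℕ → ℝ) :
    ∑ t ∈ Icc s S, ((S - s).choose (t - s) : ℝ) * (1 - q) ^ (t - s) * q ^ (S - t) * f t
      = binomialExpectation (S - s) (1 - q) fun i => f (s + i) := by
  rw [← Ico_add_one_right_eq_Icc, sum_Ico_eq_sum_range, binomialExpectation,
    show S + 1 - s = S - s + 1 by omega, sub_sub_cancel]
  refine sum_congr rfl fun i _ => ?_
  rw [Nat.add_sub_cancel_left, show S - (s + i) = S - s - i by omega]

theorem k_step_expectation_ge_one_step_general (S s n k : ℕ) (hs : s ≤ S)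
    (hk : 1 ≤ k)
    (p : ℝ) (hp0 : 0 ≤ p) (hp1 : p ≤ 1) (g : ℕ → ℕ → ℝ)
    (hg1 : ∀ m : ℕ, ∀ a b : ℕ, a ≤ b → g a m ≤ g b m) :
    ∑ t ∈ Finset.Icc s S,
        (((S - s).choose (t - s) : ℝ) * (1 - (1 - p) ^ k) ^ (t - s)
          * ((1 - p) ^ k) ^ (S - t)) * g t (n + 1)
      ≥ ∑ t ∈ Finset.Icc s S,
        (((S - s).choose (t - s) : ℝ) * (1 - (1 - p) ^ 1) ^ (t - s)
          * ((1 - p) ^ 1) ^ (S - t)) * g t (n + 1) := by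
  have hq₀ : 0 ≤ 1 - p := sub_nonneg.2 hp1
  have hqk : (1 - p) ^ k ≤ (1 - p) ^ 1 := pow_le_pow_of_le_one hq₀ (by linarith) hk
  rw [ge_iff_le, sum_Icc_eq_binomialExpectation hs, sum_Icc_eq_binomialExpectation hs]
  refine binomialExpectation_mono_prob (S - s) (fun a b hab => hg1 _ _ _ (by omega)) ?_ ?_ ?_
  · linarith
  · linarith
  · linarith [pow_nonneg hq₀ k]

theorem k_step_expectation_ge_one_step (S s n N k : ℕ) (hs : s ≤ S)
    (hnN : n < N) (hk : 1 ≤ k) (hkN : n + k ≤ N)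
    (p : ℝ) (hp0 : 0 ≤ p) (hp1 : p ≤ 1) (g : ℕ → ℕ → ℝ)
    (hg1 : ∀ m : ℕ, ∀ a b : ℕ, a ≤ b → g a m ≤ g b m)
    (hg2 : ∀ a : ℕ, ∀ m m' : ℕ, m ≤ m' → g a m' ≤ g a m) :
    ∑ t ∈ Finset.Icc s S,
        (((S - s).choose (t - s) : ℝ) * (1 - (1 - p) ^ k) ^ (t - s)
          * ((1 - p) ^ k) ^ (S - t)) * g t (n + 1)
      ≥ ∑ t ∈ Finset.Icc s S,
        (((S - s).choose (t - s) : ℝ) * (1 - (1 - p) ^ 1) ^ (t - s)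
          * ((1 - p) ^ 1) ^ (S - t)) * g t (n + 1) :=
  k_step_expectation_ge_one_step_general S s n k hs hk p hp0 hp1 g hg1
end

section
/- For the binomial transition kernel p(·|s) with parameter p ∈ [0,1]: if s ≤ s', then the distribution of the next state starting from s' stochastically dominates that starting from s; i.e., for every threshold t, ∑_{s̃ ≥ t} p(s̃|s') ≥ ∑_{s̃ ≥ t} p(s̃|s), where p(s̃|s) = C(S-s, s̃-s) p^(s̃-s)(1-p)^(S-s̃). -/
open Finset

private noncomputable def Tail (p : ℝ) (n m : ℕ) : ℝ :=
  ∑ k ∈ Finset.Icc m n, (n.choose k : ℝ) * p ^ k * (1 - p) ^ (n - k)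

private lemma Tail_zero (p : ℝ) (n : ℕ) : Tail p n 0 = 1 := by
  rw [Tail, show Finset.Icc 0 n = Finset.range (n+1) by ext k; simp [Nat.lt_succ_iff]]
  calc ∑ k ∈ Finset.range (n+1), (n.choose k : ℝ) * p ^ k * (1 - p) ^ (n - k)
      = (p + (1 - p)) ^ n := by
        rw [add_pow]; exact Finset.sum_congr rfl (fun k _ => by ring)
    _ = 1 := by norm_num

private lemma Tail_anti (p : ℝ) (hp0 : 0 ≤ p) (hp1 : p ≤ 1) (n : ℕ) {m m' : ℕ}
    (h : m ≤ m') : Tail p n m' ≤ Tail p n m := by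
  apply Finset.sum_le_sum_of_subset_of_nonneg
  · exact Finset.Icc_subset_Icc h le_rfl
  · intro k _ _
    have : (0:ℝ) ≤ 1 - p := by linarith
    positivity

private lemma Tail_pascal (p : ℝ) (n m : ℕ) :
    Tail p (n+1) (m+1) = p * Tail p n m + (1 - p) * Tail p n (m+1) := by
  have step1 : Tail p (n+1) (m+1)
      = ∑ j ∈ Finset.Icc m n, ((n+1).choose (j+1) : ℝ) * p ^ (j+1) * (1-p) ^ (n - j) := by
    rw [Tail]
    refine Finset.sum_nbij' (fun k => k - 1) (fun j => j + 1) ?_ ?_ ?_ ?_ ?_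
    · intro a ha; simp only [Finset.mem_Icc] at *; omega
    · intro a ha; simp only [Finset.mem_Icc] at *; omega
    · intro a ha; simp only [Finset.mem_Icc] at ha; omega
    · intro a ha; omega
    · intro a ha
      simp only [Finset.mem_Icc] at ha
      have h1 : a - 1 + 1 = a := by omega
      have h2 : n - (a - 1) = n + 1 - a := by omega
      rw [h1, h2]
  have step2 : ∀ j ∈ Finset.Icc m n,
      ((n+1).choose (j+1) : ℝ) * p ^ (j+1) * (1-p) ^ (n - j)
      = p * ((n.choose j : ℝ) * p ^ j * (1-p) ^ (n - j))
        + (n.choose (j+1) : ℝ) * p ^ (j+1) * (1-p) ^ (n - j) := by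
    intro j _
    rw [Nat.choose_succ_succ]
    push_cast
    ring
  rw [step1, Finset.sum_congr rfl step2, Finset.sum_add_distrib, ← Finset.mul_sum]
  congr 1
  -- remaining: ∑_{j∈Icc m n} C(n,j+1) p^{j+1} q^{n-j} = (1-p) * Tail p n (m+1)
  rw [Tail, Finset.mul_sum]
  rcases Nat.lt_or_ge n (m+1) with h | h
  · -- Icc (m+1) n empty
    rw [Finset.Icc_eq_empty (show ¬ (m+1 : ℕ) ≤ n by omega), Finset.sum_empty]
    apply Finset.sum_eq_zero
    intro j hj
    simp only [Finset.mem_Icc] at hj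
    have : n < j + 1 := by omega
    rw [Nat.choose_eq_zero_of_lt this]
    simp
  · -- split off j = n from LHS: Icc m n = Icc m (n-1) ∪ {n}? easier: reindex RHS
    have : ∑ k ∈ Finset.Icc (m+1) n, (1-p) * ((n.choose k : ℝ) * p ^ k * (1-p) ^ (n-k))
        = ∑ j ∈ Finset.Icc m (n-1), (n.choose (j+1) : ℝ) * p ^ (j+1) * (1-p) ^ (n - j) := by
      refine Finset.sum_nbij' (fun k => k - 1) (fun j => j + 1) ?_ ?_ ?_ ?_ ?_
      · intro a ha; simp only [Finset.mem_Icc] at *; omega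
      · intro a ha; simp only [Finset.mem_Icc] at *; omega
      · intro a ha; simp only [Finset.mem_Icc] at ha; omega
      · intro a ha; omega
      · intro a ha
        simp only [Finset.mem_Icc] at ha
        have h1 : a - 1 + 1 = a := by omega
        have h2 : n - (a - 1) = n - a + 1 := by omega
        rw [h1, h2, pow_succ]
        ring
    rw [this]
    have hsplit : Finset.Icc m n = insert n (Finset.Icc m (n-1)) := by
      ext k; simp only [Finset.mem_insert, Finset.mem_Icc]; omega
    rw [hsplit, Finset.sum_insert (by simp only [Finset.mem_Icc]; omega)]
    rw [Nat.choose_eq_zero_of_lt (by omega)]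
    simp

private lemma Tail_step (p : ℝ) (hp0 : 0 ≤ p) (hp1 : p ≤ 1) (n m : ℕ) :
    Tail p (n+1) (m+1) ≤ Tail p n m := by
  rw [Tail_pascal]
  have h1 : Tail p n (m+1) ≤ Tail p n m := Tail_anti p hp0 hp1 n (Nat.le_succ m)
  nlinarith [Tail_anti p hp0 hp1 n (Nat.le_succ m)]

private lemma Tail_step' (p : ℝ) (hp0 : 0 ≤ p) (hp1 : p ≤ 1) (n : ℕ) :
    Tail p (n+1) 0 ≤ Tail p n 0 := by
  rw [Tail_zero, Tail_zero]

theorem binomial_kernel_stochastically_monotone_in_s (S s s' : ℕ)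
    (hss' : s ≤ s') (hs'S : s' ≤ S) (p : ℝ) (hp0 : 0 ≤ p) (hp1 : p ≤ 1)
    (thr : ℕ) :
    ∑ t ∈ (Finset.Icc s' S).filter (fun t => thr ≤ t),
        ((S - s').choose (t - s') : ℝ) * p ^ (t - s') * (1 - p) ^ (S - t)
      ≥ ∑ t ∈ (Finset.Icc s S).filter (fun t => thr ≤ t),
        ((S - s).choose (t - s) : ℝ) * p ^ (t - s) * (1 - p) ^ (S - t) := by
  -- rewrite each side as a Tail
  have key : ∀ u : ℕ, u ≤ S →
      ∑ t ∈ (Finset.Icc u S).filter (fun t => thr ≤ t),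
        ((S - u).choose (t - u) : ℝ) * p ^ (t - u) * (1 - p) ^ (S - t)
      = Tail p (S - u) (thr - u) := by
    intro u huS
    have hfilter : (Finset.Icc u S).filter (fun t => thr ≤ t)
        = Finset.Icc (max thr u) S := by
      ext t
      simp only [Finset.mem_filter, Finset.mem_Icc, max_le_iff]
      omega
    rw [hfilter, Tail]
    refine Finset.sum_nbij' (fun t => t - u) (fun k => k + u) ?_ ?_ ?_ ?_ ?_
    · intro a ha; simp only [Finset.mem_Icc, max_le_iff] at *; omega
    · intro a ha; simp only [Finset.mem_Icc] at *; omega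
    · intro a ha; simp only [Finset.mem_Icc, max_le_iff] at ha; omega
    · intro a ha; omega
    · intro a ha
      simp only [Finset.mem_Icc, max_le_iff] at ha
      have h2 : S - u - (a - u) = S - a := by omega
      rw [h2]
  rw [key s (le_trans hss' hs'S), key s' hs'S, ge_iff_le]
  -- now induction on s'
  clear key
  induction s', hss' using Nat.le_induction with
  | base => exact le_rfl
  | succ s' hs'' ih =>
    have hs'S' : s' ≤ S := by omega
    refine le_trans (ih hs'S') ?_
    have hn : S - s' = (S - (s'+1)) + 1 := by omega
    rcases Nat.lt_or_ge s' thr with h | h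
    · have hm : thr - s' = (thr - (s'+1)) + 1 := by omega
      rw [hn, hm]
      exact Tail_step p hp0 hp1 _ _
    · have hm : thr - s' = 0 := by omega
      have hm' : thr - (s'+1) = 0 := by omega
      rw [hn, hm, hm']
      exact Tail_step' p hp0 hp1 _
end
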